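/- Let h be the arithmetic function h(n) = (−1)ⁿ/n (with values in ℚ). Define g by: g(n) = μ(n)·(−1)ⁿ/n if n is odd (μ the Möbius function), and g(n) = f(n) if n is even, where f(n) = 0 if n is divisible by d² for some odd d > 1, and otherwise f(n) = (−1)^k/(p₁⋯p_k) with p₁,…,p_k the distinct primes dividing n. Then g is the Dirichlet-convolution inverse of h: for every n ≥ 1, ∑_{d | n} h(d)·g(n/d) = 1 if n = 1 and 0 otherwise. -/

import Mathlib

open scoped Classical

/-- The arithmetic function `h(n) = (−1)ⁿ/n`. -/
def hfun (n : ℕ) : ℚ := (-1) ^ n / n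

/-- `f(n) = 0` if `n` is divisible by `d²` for some odd `d > 1`, and otherwise
`f(n) = (−1)^k/(p₁⋯p_k)` where `p₁, …, p_k` are the distinct primes dividing `n`. -/
noncomputable def ffun (n : ℕ) : ℚ :=
  if ∃ d : ℕ, 1 < d ∧ Odd d ∧ d ^ 2 ∣ n then 0
  else (-1) ^ n.primeFactors.card / ∏ p ∈ n.primeFactors, (p : ℚ)

/-- `g(n) = μ(n)·(−1)ⁿ/n` for odd `n` and `g(n) = f(n)` for even `n`. -/
noncomputable def gfun (n : ℕ) : ℚ :=
  if Odd n then (ArithmeticFunction.moebius n : ℚ) * (-1) ^ n / n else ffun n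

open ArithmeticFunction
open scoped ArithmeticFunction.Moebius

/-- `H(n) = (−1)^(n+1)/n`, a multiplicative function with `h = -H`. -/
noncomputable def Hf : ArithmeticFunction ℚ :=
  ⟨fun n => (-1) ^ (n + 1) / n, by simp⟩

lemma Hf_apply (n : ℕ) : Hf n = (-1) ^ (n + 1) / n := rfl

/-- `G(n) = c(n) · μ(oddpart n)/oddpart n` with `c(n) = 1/2` for even `n`, `1` for odd. -/
noncomputable def Gf : ArithmeticFunction ℚ :=
  ⟨fun n => (if 2 ∣ n then (1 : ℚ)/2 else 1) *
      (μ (ordCompl[2] n) : ℚ) / (((ordCompl[2] n : ℕ) : ℚ)), by simp⟩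

lemma Gf_apply (n : ℕ) : Gf n = (if 2 ∣ n then (1 : ℚ)/2 else 1) *
    (μ (ordCompl[2] n) : ℚ) / (((ordCompl[2] n : ℕ) : ℚ)) := rfl

lemma hfun_eq (n : ℕ) : hfun n = -Hf n := by
  simp only [hfun, Hf_apply, pow_succ]
  ring

lemma Hf_mult : Hf.IsMultiplicative := by
  refine ⟨by norm_num [Hf_apply], ?_⟩
  intro m n hmn
  have hsign : (-1 : ℚ) ^ (m * n + 1) = (-1) ^ (m + 1) * (-1) ^ (n + 1) := by
    rcases Nat.even_or_odd m with hm | hm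
    · rcases Nat.even_or_odd n with hn | hn
      · exfalso
        have h2 : (2 : ℕ) ∣ Nat.gcd m n := Nat.dvd_gcd hm.two_dvd hn.two_dvd
        rw [hmn] at h2
        omega
      · rw [(hm.mul_right n).add_one.neg_one_pow, hm.add_one.neg_one_pow,
          hn.add_one.neg_one_pow]; ring
    · rcases Nat.even_or_odd n with hn | hn
      · rw [(hn.mul_left m).add_one.neg_one_pow, hm.add_one.neg_one_pow,
          hn.add_one.neg_one_pow]; ring
      · rw [(hm.mul hn).add_one.neg_one_pow, hm.add_one.neg_one_pow,
          hn.add_one.neg_one_pow]; ring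
  simp only [Hf_apply, hsign]
  push_cast
  ring

lemma Gf_mult : Gf.IsMultiplicative := by
  refine ⟨by norm_num [Gf_apply], ?_⟩
  intro m n hmn
  rcases eq_or_ne m 0 with rfl | hm0
  · simp [Gf_apply]
  rcases eq_or_ne n 0 with rfl | hn0
  · simp [Gf_apply]
  have hoc : ordCompl[2] (m * n) = ordCompl[2] m * ordCompl[2] n :=
    Nat.ordCompl_mul m n 2
  have hcop : Nat.Coprime (ordCompl[2] m) (ordCompl[2] n) :=
    Nat.Coprime.coprime_dvd_left (Nat.ordCompl_dvd m 2)
      (Nat.Coprime.coprime_dvd_right (Nat.ordCompl_dvd n 2) hmn)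
  have hifs : (if 2 ∣ m * n then (1 : ℚ)/2 else 1) =
      (if 2 ∣ m then (1 : ℚ)/2 else 1) * (if 2 ∣ n then (1 : ℚ)/2 else 1) := by
    by_cases h2m : 2 ∣ m
    · by_cases h2n : 2 ∣ n
      · exfalso
        have h2 : (2 : ℕ) ∣ Nat.gcd m n := Nat.dvd_gcd h2m h2n
        rw [hmn] at h2; omega
      · simp [h2m, h2n, dvd_mul_of_dvd_left h2m]
    · by_cases h2n : 2 ∣ n
      · simp [h2m, h2n, dvd_mul_of_dvd_right h2n]
      · have : ¬ 2 ∣ m * n := by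
          intro h
          rcases (Nat.prime_two.dvd_mul).mp h with h | h <;> tauto
        simp [h2m, h2n, this]
  rw [Gf_apply, Gf_apply, Gf_apply, hoc, hifs]
  obtain ⟨a, ha⟩ : ∃ a, ordCompl[2] m = a := ⟨_, rfl⟩
  obtain ⟨b, hb⟩ : ∃ b, ordCompl[2] n = b := ⟨_, rfl⟩
  rw [ha, hb] at hcop ⊢
  have hmu : (μ (a * b) : ℤ) = μ a * μ b :=
    isMultiplicative_moebius.map_mul_of_coprime hcop
  rw [hmu]
  push_cast
  ring

lemma Hf_two_pow (i : ℕ) (hi : i ≠ 0) : Hf (2 ^ i) = -1 / 2 ^ i := by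
  have he : Even (2 ^ i) := (Nat.even_pow).mpr ⟨even_two, hi⟩
  rw [Hf_apply, he.add_one.neg_one_pow]
  push_cast
  ring

lemma ordCompl_two_pow (i : ℕ) : ordCompl[2] (2 ^ i) = 1 := by
  rw [Nat.Prime.factorization_pow Nat.prime_two, Finsupp.single_eq_same,
    Nat.div_self (by positivity)]

lemma Gf_two_pow (i : ℕ) (hi : i ≠ 0) : Gf (2 ^ i) = 1 / 2 := by
  have h2 : (2 : ℕ) ∣ 2 ^ i := dvd_pow_self 2 hi
  rw [Gf_apply, ordCompl_two_pow, if_pos h2]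
  simp

lemma ordCompl_of_odd {n : ℕ} (hn : Odd n) : ordCompl[2] n = n := by
  have h2 : ¬ (2 : ℕ) ∣ n := by
    rw [Nat.two_dvd_ne_zero]
    exact Nat.odd_iff.mp hn
  rw [Nat.factorization_eq_zero_of_not_dvd h2, pow_zero, Nat.div_one]

lemma Hf_odd_pow {p : ℕ} (hp : Odd p) (i : ℕ) : Hf (p ^ i) = 1 / p ^ i := by
  have ho : Odd (p ^ i) := hp.pow
  rw [Hf_apply, ho.add_one.neg_one_pow]
  push_cast
  ring

lemma Gf_odd_pow {p : ℕ} (hp : Odd p) (i : ℕ) :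
    Gf (p ^ i) = (μ (p ^ i) : ℚ) / p ^ i := by
  have ho : Odd (p ^ i) := hp.pow
  have h2 : ¬ (2 : ℕ) ∣ p ^ i := by
    rw [Nat.two_dvd_ne_zero]
    exact Nat.odd_iff.mp ho
  rw [Gf_apply, ordCompl_of_odd ho, if_neg h2]
  push_cast
  ring

lemma sum_Hf_two_pow (k : ℕ) :
    ∑ i ∈ Finset.range (k + 1), Hf (2 ^ i) = 1 / 2 ^ k := by
  induction k with
  | zero => norm_num [Hf_apply]
  | succ k ih =>
    rw [Finset.sum_range_succ, ih, Hf_two_pow (k + 1) (by omega)]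
    rw [pow_succ]
    ring

lemma sum_moebius_pow {p : ℕ} (hp : p.Prime) (k : ℕ) (hk : k ≠ 0) :
    ∑ j ∈ Finset.range (k + 1), (μ (p ^ j) : ℚ) = 0 := by
  induction k with
  | zero => omega
  | succ k ih =>
    rcases eq_or_ne k 0 with rfl | hk0
    · norm_num [Finset.sum_range_succ, moebius_apply_prime hp]
    · rw [Finset.sum_range_succ, ih hk0,
        moebius_apply_prime_pow hp (by omega : k + 1 ≠ 0), if_neg (by omega)]
      simp

lemma HG_eq_one : Hf * Gf = 1 := by
  rw [ArithmeticFunction.IsMultiplicative.eq_iff_eq_on_prime_powers _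
    (Hf_mult.mul Gf_mult) _ isMultiplicative_one]
  intro p k hp
  rcases eq_or_ne k 0 with rfl | hk
  · simp [(Hf_mult.mul Gf_mult).map_one, isMultiplicative_one.map_one]
  have hpk1 : p ^ k ≠ 1 := (Nat.one_lt_pow hk hp.one_lt).ne'
  rw [ArithmeticFunction.one_apply, if_neg hpk1, mul_apply,
    Nat.sum_divisorsAntidiagonal (fun a b => Hf a * Gf b),
    Nat.sum_divisors_prime_pow hp]
  have hdiv : ∀ i ∈ Finset.range (k + 1), p ^ k / p ^ i = p ^ (k - i) := by
    intro i hi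
    rw [Finset.mem_range] at hi
    rw [Nat.pow_div (by omega) hp.pos]
  rcases eq_or_ne p 2 with rfl | hp2
  · -- p = 2
    have h1 : ∀ i ∈ Finset.range (k + 1), Hf (2 ^ i) * Gf (2 ^ k / 2 ^ i)
        = Hf (2 ^ i) * Gf (2 ^ (k - i)) := by
      intro i hi; rw [hdiv i hi]
    rw [Finset.sum_congr rfl h1]
    obtain ⟨j, rfl⟩ : ∃ j, k = j + 1 := ⟨k - 1, by omega⟩
    rw [Finset.sum_range_succ]
    have hlast : Hf (2 ^ (j + 1)) * Gf (2 ^ (j + 1 - (j + 1)))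
        = -1 / 2 ^ (j + 1) := by
      rw [Nat.sub_self, pow_zero, Gf_mult.map_one, Hf_two_pow (j + 1) (by omega)]
      ring
    have hrest : ∀ i ∈ Finset.range (j + 1),
        Hf (2 ^ i) * Gf (2 ^ (j + 1 - i)) = Hf (2 ^ i) * (1 / 2) := by
      intro i hi
      rw [Finset.mem_range] at hi
      rw [Gf_two_pow (j + 1 - i) (by omega)]
    rw [hlast, Finset.sum_congr rfl hrest, ← Finset.sum_mul, sum_Hf_two_pow j]
    rw [pow_succ]
    ring
  · -- p odd
    have hpodd : Odd p := hp.odd_of_ne_two hp2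
    have hterm : ∀ i ∈ Finset.range (k + 1), Hf (p ^ i) * Gf (p ^ k / p ^ i)
        = (μ (p ^ (k - i)) : ℚ) * (1 / p ^ k) := by
      intro i hi
      have hi' := Finset.mem_range.mp hi
      rw [hdiv i hi, Hf_odd_pow hpodd, Gf_odd_pow hpodd]
      have hne : (p : ℚ) ^ i ≠ 0 := by
        have := hp.pos
        positivity
      have hne2 : (p : ℚ) ^ (k - i) ≠ 0 := by
        have := hp.pos
        positivity
      have hpow : (p : ℚ) ^ i * (p : ℚ) ^ (k - i) = (p : ℚ) ^ k := by
        rw [← pow_add]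
        congr 1
        omega
      rw [div_mul_div_comm, one_mul, hpow, mul_one_div]
    rw [Finset.sum_congr rfl hterm, ← Finset.sum_mul]
    have hrefl : ∑ i ∈ Finset.range (k + 1), (μ (p ^ (k - i)) : ℚ)
        = ∑ j ∈ Finset.range (k + 1), (μ (p ^ j) : ℚ) := by
      rw [← Finset.sum_range_reflect]
      apply Finset.sum_congr rfl
      intro i hi
      rw [Finset.mem_range] at hi
      have h3 : k - (k + 1 - 1 - i) = i := by omega
      rw [h3]
    rw [hrefl, sum_moebius_pow hp k hk, zero_mul]

lemma gfun_eq (m : ℕ) (hm : 1 ≤ m) : gfun m = -Gf m := by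
  by_cases hodd : Odd m
  · have h2 : ¬ (2 : ℕ) ∣ m := by
      rw [Nat.two_dvd_ne_zero]
      exact Nat.odd_iff.mp hodd
    rw [gfun, if_pos hodd, Gf_apply, ordCompl_of_odd hodd, if_neg h2, hodd.neg_one_pow]
    ring
  · -- m even
    have hm0 : m ≠ 0 := by omega
    have h2m : (2 : ℕ) ∣ m := (Nat.not_odd_iff_even.mp hodd).two_dvd
    have ho_pos : 0 < ordCompl[2] m := Nat.ordCompl_pos 2 hm0
    have h2o := Nat.not_dvd_ordCompl Nat.prime_two hm0
    have ho_odd : Odd (ordCompl[2] m) := Nat.odd_iff.mpr (by omega)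
    have hk_pos : m.factorization 2 ≠ 0 := by
      have := Nat.Prime.factorization_pos_of_dvd Nat.prime_two hm0 h2m
      omega
    have hm_eq : 2 ^ m.factorization 2 * ordCompl[2] m = m :=
      Nat.ordProj_mul_ordCompl_eq_self m 2
    rw [gfun, if_neg hodd, Gf_apply, if_pos h2m]
    obtain ⟨o, ho⟩ : ∃ o, ordCompl[2] m = o := ⟨_, rfl⟩
    obtain ⟨k, hk⟩ : ∃ k, m.factorization 2 = k := ⟨_, rfl⟩
    rw [ho] at ho_pos h2o ho_odd ⊢
    rw [hk] at hk_pos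
    rw [ho, hk] at hm_eq
    by_cases hsq : ∃ d : ℕ, 1 < d ∧ Odd d ∧ d ^ 2 ∣ m
    · -- μ o = 0
      obtain ⟨d, hd1, hdodd, hdvd⟩ := hsq
      have hdcop : Nat.Coprime (d ^ 2) (2 ^ k) :=
        Nat.Coprime.pow _ _ (Nat.coprime_two_right.mpr hdodd)
      have hdvd' : d ^ 2 ∣ o := by
        rw [← hm_eq] at hdvd
        exact Nat.Coprime.dvd_of_dvd_mul_left hdcop hdvd
      have hnsq : ¬ Squarefree o := by
        intro hsf
        have := hsf d (by rw [← sq]; exact hdvd')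
        rw [Nat.isUnit_iff] at this
        omega
      rw [ffun, if_pos ⟨d, hd1, hdodd, hdvd⟩, moebius_eq_zero_of_not_squarefree hnsq]
      simp
    · -- o squarefree
      have hsf : Squarefree o := by
        intro x hx
        have hxdvd : x ∣ o := dvd_trans (dvd_mul_right x x) hx
        have hx0 : x ≠ 0 := by
          rintro rfl
          rw [zero_mul, zero_dvd_iff] at hx
          omega
        have hxodd : Odd x := by
          rcases Nat.even_or_odd x with he | ho'
          · exfalso
            exact h2o (dvd_trans he.two_dvd hxdvd)
          · exact ho'
        rcases Nat.lt_or_ge x 2 with hx2 | hx2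
        · rw [Nat.isUnit_iff]; omega
        · exfalso
          apply hsq
          refine ⟨x, by omega, hxodd, ?_⟩
          have h1 : x ^ 2 ∣ o := by rw [sq]; exact hx
          have h2 : o ∣ m := by
            rw [← hm_eq]
            exact dvd_mul_left o (2 ^ k)
          exact dvd_trans h1 h2
      have ho2 : 2 ∉ o.primeFactors := fun h => h2o (Nat.dvd_of_mem_primeFactors h)
      have hpf : m.primeFactors = insert 2 o.primeFactors := by
        rw [← hm_eq, Nat.primeFactors_mul (by positivity) (by omega),
          Nat.primeFactors_prime_pow hk_pos Nat.prime_two]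
        exact (Finset.insert_eq 2 o.primeFactors).symm
      have hcard : m.primeFactors.card = o.primeFactors.card + 1 := by
        rw [hpf, Finset.card_insert_of_notMem ho2]
      have hprod : (∏ p ∈ m.primeFactors, (p : ℚ)) = 2 * o := by
        rw [hpf, Finset.prod_insert ho2]
        congr 1
        rw [← Nat.cast_prod]
        congr 1
        exact Nat.prod_primeFactors_of_squarefree hsf
      have hmu : (μ o : ℚ) = (-1) ^ o.primeFactors.card := by
        rw [moebius_apply_of_squarefree hsf]
        push_cast
        congr 1
        rw [← (cardDistinctFactors_eq_cardFactors_iff_squarefree (by omega)).mpr hsf,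
          cardDistinctFactors_apply, ← List.card_toFinset]
        rfl
      rw [ffun, if_neg hsq, hcard, hprod, hmu]
      have hone : (o : ℚ) ≠ 0 := by positivity
      field_simp
      ring

theorem convolution_inverse_of_alternating_harmonic (n : ℕ) (hn : 1 ≤ n) :
    (∑ d ∈ n.divisors, hfun d * gfun (n / d)) = if n = 1 then 1 else 0 := by
  have h1 : ∀ d ∈ n.divisors, hfun d * gfun (n / d) = Hf d * Gf (n / d) := by
    intro d hd
    rw [Nat.mem_divisors] at hd
    have hd0 : 0 < d := Nat.pos_of_dvd_of_pos hd.1 (by omega)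
    have hnd : 1 ≤ n / d := (Nat.one_le_div_iff hd0).mpr (Nat.le_of_dvd (by omega) hd.1)
    rw [hfun_eq, gfun_eq _ hnd]
    ring
  rw [Finset.sum_congr rfl h1]
  have h2 : (∑ d ∈ n.divisors, Hf d * Gf (n / d)) = (Hf * Gf) n := by
    rw [mul_apply, Nat.sum_divisorsAntidiagonal (fun a b => Hf a * Gf b)]
  rw [h2, HG_eq_one, ArithmeticFunction.one_apply]
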